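/- arXiv:2501.07446 — 2 statements merged into one kernel-verified Lean document; each statement's English description precedes it below -/
import Mathlib

section
/- Let Ω ⊆ ℝ^d be a nonempty closed set and let F : P₂(Ω) → ℝ admit a minimizer μ* ∈ P₂(Ω). Suppose F admits a derivative at μ*: there is a continuous δ : ℝ^d → ℝ, integrable with respect to μ* and to every ρ ∈ P₂(Ω), such that for every ρ ∈ P₂(Ω), lim_{t→0⁺} (F(μ* + t(ρ−μ*)) − F(μ*))/t = ∫ δ dρ − ∫ δ dμ*. Let c* := inf_{x ∈ Ω} δ(x). Then c* > −∞, and δ(x) = c* for every x in the support of μ*. -/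
open MeasureTheory ENNReal Filter
open scoped Topology

/-- `μ ∈ P₂(Ω)`: a Borel probability measure supported in `Ω` with finite second moment. -/
def MemP2 {d : ℕ} (μ : Measure (EuclideanSpace ℝ (Fin d)))
    (Ω : Set (EuclideanSpace ℝ (Fin d))) : Prop :=
  IsProbabilityMeasure μ ∧ μ Ωᶜ = 0 ∧ Integrable (fun x => ‖x‖ ^ 2) μ

/-- The (topological) support of a measure: points all of whose open neighbourhoods have
nonzero measure. -/
def msupport {d : ℕ} (μ : Measure (EuclideanSpace ℝ (Fin d))) :
    Set (EuclideanSpace ℝ (Fin d)) :=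
  {x | ∀ U : Set (EuclideanSpace ℝ (Fin d)), IsOpen U → x ∈ U → μ U ≠ 0}

/-- At a minimizer `μ*` of a differentiable functional on `P₂(Ω)`, the derivative `δ`
is bounded below on `Ω` and equals its infimum `c* = inf_{x ∈ Ω} δ(x)` on the support
of `μ*`. -/
theorem derivative_constant_on_support_of_minimizer
    {d : ℕ} (Ω : Set (EuclideanSpace ℝ (Fin d)))
    (hΩne : Ω.Nonempty) (hΩcl : IsClosed Ω)
    (F : Measure (EuclideanSpace ℝ (Fin d)) → ℝ)
    (μstar : Measure (EuclideanSpace ℝ (Fin d))) (hμstar : MemP2 μstar Ω)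
    (hmin : ∀ μ, MemP2 μ Ω → F μstar ≤ F μ)
    (δ : EuclideanSpace ℝ (Fin d) → ℝ) (hδcont : Continuous δ)
    (hδint : Integrable δ μstar) (hδint' : ∀ ρ, MemP2 ρ Ω → Integrable δ ρ)
    (hderiv : ∀ ρ : Measure (EuclideanSpace ℝ (Fin d)), MemP2 ρ Ω →
      Tendsto
        (fun t : ℝ =>
          (F (ENNReal.ofReal (1 - t) • μstar + ENNReal.ofReal t • ρ) - F μstar) / t)
        (𝓝[>] (0 : ℝ)) (𝓝 ((∫ x, δ x ∂ρ) - ∫ x, δ x ∂μstar))) :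
    BddBelow (δ '' Ω) ∧ ∀ x ∈ msupport μstar, δ x = sInf (δ '' Ω) := by
  obtain ⟨hμprob, hμΩ, hμmom⟩ := hμstar
  -- mixtures are in P₂(Ω)
  have hmix : ∀ ρ, MemP2 ρ Ω → ∀ t : ℝ, 0 ≤ t → t ≤ 1 →
      MemP2 (ENNReal.ofReal (1 - t) • μstar + ENNReal.ofReal t • ρ) Ω := by
    rintro ρ ⟨hρprob, hρΩ, hρmom⟩ t h0 h1
    refine ⟨?_, ?_, ?_⟩
    · constructor
      simp only [Measure.add_apply, Measure.smul_apply, smul_eq_mul,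
        measure_univ, mul_one]
      rw [← ENNReal.ofReal_add (by linarith) h0]
      norm_num
    · simp [Measure.add_apply, Measure.smul_apply, hμΩ, hρΩ]
    · exact (hμmom.smul_measure ofReal_ne_top).add_measure (hρmom.smul_measure ofReal_ne_top)
  -- key inequality: ∫ δ dμ* ≤ ∫ δ dρ for every ρ ∈ P₂(Ω)
  have hkey : ∀ ρ, MemP2 ρ Ω → ∫ x, δ x ∂μstar ≤ ∫ x, δ x ∂ρ := by
    intro ρ hρ
    have h := hderiv ρ hρ
    have hnonneg : ∀ᶠ t in 𝓝[>] (0:ℝ), (0:ℝ) ≤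
        (F (ENNReal.ofReal (1 - t) • μstar + ENNReal.ofReal t • ρ) - F μstar) / t := by
      filter_upwards [Ioo_mem_nhdsGT_of_mem (by norm_num : (0:ℝ) ∈ Set.Ico 0 1)] with t ht
      exact div_nonneg (sub_nonneg.2 (hmin _ (hmix ρ hρ t ht.1.le ht.2.le))) ht.1.le
    have := ge_of_tendsto h hnonneg
    linarith
  -- evaluate on Dirac measures
  have hdirac : ∀ y ∈ Ω, ∫ x, δ x ∂μstar ≤ δ y := by
    intro y hy
    have hmem : MemP2 (Measure.dirac y) Ω := by
      refine ⟨by infer_instance, ?_, ?_⟩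
      · rw [Measure.dirac_apply' _ hΩcl.isOpen_compl.measurableSet]
        simp [hy]
      · exact (integrable_const (α := EuclideanSpace ℝ (Fin d)) (‖y‖^2)).congr
          (MeasureTheory.ae_eq_dirac (fun x => ‖x‖^2)).symm
    have := hkey _ hmem
    rwa [integral_dirac] at this
  set I := ∫ x, δ x ∂μstar with hI
  have hbdd : BddBelow (δ '' Ω) := ⟨I, by rintro _ ⟨y, hy, rfl⟩; exact hdirac y hy⟩
  set c := sInf (δ '' Ω) with hc
  have hIc : I ≤ c := le_csInf (hΩne.image δ) (by rintro _ ⟨y, hy, rfl⟩; exact hdirac y hy)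
  -- δ ≥ c a.e. μ*
  have haeΩ : ∀ᵐ x ∂μstar, x ∈ Ω := by
    rw [ae_iff]
    exact hμΩ
  have hge : ∀ᵐ x ∂μstar, c ≤ δ x := by
    filter_upwards [haeΩ] with x hx
    exact csInf_le hbdd ⟨x, hx, rfl⟩
  -- hence I ≥ c, so I = c
  have hcI : c ≤ I := by
    have : ∫ x, (c : ℝ) ∂μstar ≤ I := integral_mono_ae (integrable_const c) hδint hge
    simpa using this
  have hIeq : I = c := le_antisymm hIc hcI
  -- δ = c a.e. μ*
  have hzero : (fun x => δ x - c) =ᵐ[μstar] 0 := by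
    refine (integral_eq_zero_iff_of_nonneg_ae
      (by filter_upwards [hge] with x hx; simpa using hx)
      (hδint.sub (integrable_const c))).1 ?_
    show ∫ x, (δ x - c) ∂μstar = 0
    rw [integral_sub hδint (integrable_const c)]
    simp [← hI, hIeq]
  refine ⟨hbdd, fun x hx => ?_⟩
  by_contra hne
  have hxΩ : x ∈ Ω := by
    by_contra hxΩ
    exact hx Ωᶜ hΩcl.isOpen_compl hxΩ hμΩ
  have hgt : c < δ x := lt_of_le_of_ne (csInf_le hbdd ⟨x, hxΩ, rfl⟩) (Ne.symm hne)
  set U := {y | c < δ y} with hU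
  have hUopen : IsOpen U := isOpen_lt continuous_const hδcont
  have hUne : μstar U ≠ 0 := hx U hUopen hgt
  have : μstar U = 0 := by
    have hsub : U ⊆ {y | (fun x => δ x - c) y ≠ 0} := fun y hy => by
      have hy' : c < δ y := hy
      simp only [Set.mem_setOf_eq]
      intro h; linarith
    exact measure_mono_null hsub (ae_iff.1 hzero)
  exact hUne this
end

section
/- Let Ω ⊆ ℝ^d be a nonempty closed set, let ν₁,…,ν_m ∈ P₂(Ω), let λ ∈ Δ^m and ε > 0, and let F^ε_{λ,V}(μ) := ∑_{j=1}^m λ_j · OT₂^ε(μ, ν_j). Then every infimizing sequence for F^ε_{λ,V} is tight: if (μ_n) ⊆ P₂(Ω) satisfies F^ε_{λ,V}(μ_n) → inf_{μ ∈ P₂(Ω)} F^ε_{λ,V}(μ), then for every δ > 0 there exists a compact set K ⊆ Ω such that μ_n(Ω ∖ K) < δ for all n. -/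
open MeasureTheory ENNReal Filter
open scoped Classical Topology

/-- Kullback–Leibler divergence between two measures. -/
noncomputable def KLdiv {α : Type*} [MeasurableSpace α] (ζ π : Measure α) : ℝ≥0∞ :=
  if ζ ≪ π ∧ Integrable (fun x => Real.log ((ζ.rnDeriv π x).toReal)) ζ then
    ENNReal.ofReal (∫ x, Real.log ((ζ.rnDeriv π x).toReal) ∂ζ)
  else ⊤

/-- The entropy-regularized Wasserstein-2 cost `OT₂^ε(μ, ν)`. -/
noncomputable def entOT {d : ℕ} (ε : ℝ) (μ ν : Measure (EuclideanSpace ℝ (Fin d))) : ℝ≥0∞ :=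
  ⨅ (ζ : Measure (EuclideanSpace ℝ (Fin d) × EuclideanSpace ℝ (Fin d)))
    (_ : ζ.map Prod.fst = μ ∧ ζ.map Prod.snd = ν),
      (∫⁻ p, ENNReal.ofReal ((1 / 2 : ℝ) * ‖p.1 - p.2‖ ^ 2) ∂ζ)
        + ENNReal.ofReal ε * KLdiv ζ (μ.prod ν)

section Aux

variable {d : ℕ}

local notation "E" => EuclideanSpace ℝ Fin d

lemma lintegral_fst_marg {d : ℕ} {ζ : Measure (EuclideanSpace ℝ (Fin d) × EuclideanSpace ℝ (Fin d))}
    {μ : Measure (EuclideanSpace ℝ (Fin d))} (h : ζ.map Prod.fst = μ)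
    {f : EuclideanSpace ℝ (Fin d) → ℝ≥0∞} (hf : Measurable f) :
    ∫⁻ p, f p.1 ∂ζ = ∫⁻ x, f x ∂μ := by
  rw [← h, lintegral_map hf measurable_fst]

lemma lintegral_snd_marg {d : ℕ} {ζ : Measure (EuclideanSpace ℝ (Fin d) × EuclideanSpace ℝ (Fin d))}
    {ν : Measure (EuclideanSpace ℝ (Fin d))} (h : ζ.map Prod.snd = ν)
    {f : EuclideanSpace ℝ (Fin d) → ℝ≥0∞} (hf : Measurable f) :
    ∫⁻ p, f p.2 ∂ζ = ∫⁻ x, f x ∂ν := by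
  rw [← h, lintegral_map hf measurable_snd]

lemma sqnorm_meas {d : ℕ} : Measurable fun x : EuclideanSpace ℝ (Fin d) =>
    ENNReal.ofReal (‖x‖ ^ 2) :=
  (ENNReal.continuous_ofReal.comp ((continuous_norm).pow 2)).measurable

lemma sqnorm_fst_meas {d : ℕ} : Measurable fun p : EuclideanSpace ℝ (Fin d) × EuclideanSpace ℝ (Fin d) =>
    ENNReal.ofReal (‖p.1‖ ^ 2) :=
  (ENNReal.continuous_ofReal.comp ((continuous_fst.norm).pow 2)).measurable

lemma sqnorm_snd_meas {d : ℕ} : Measurable fun p : EuclideanSpace ℝ (Fin d) × EuclideanSpace ℝ (Fin d) =>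
    ENNReal.ofReal (‖p.2‖ ^ 2) :=
  (ENNReal.continuous_ofReal.comp ((continuous_snd.norm).pow 2)).measurable

lemma moment_lt_top {d : ℕ} {μ : Measure (EuclideanSpace ℝ (Fin d))}
    (h : Integrable (fun x => ‖x‖ ^ 2) μ) :
    ∫⁻ x, ENNReal.ofReal (‖x‖ ^ 2) ∂μ < ⊤ := by
  have h2 := h.hasFiniteIntegral
  rw [HasFiniteIntegral] at h2
  refine lt_of_eq_of_lt ?_ h2
  refine lintegral_congr fun x => ?_
  rw [← Real.enorm_eq_ofReal (by positivity)]

lemma key_ineq {d : ℕ} (ε : ℝ) (μ ν : Measure (EuclideanSpace ℝ (Fin d))) :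
    ENNReal.ofReal (1/4) * ∫⁻ x, ENNReal.ofReal (‖x‖ ^ 2) ∂μ ≤
      entOT ε μ ν + ENNReal.ofReal (1/2) * ∫⁻ y, ENNReal.ofReal (‖y‖ ^ 2) ∂ν := by
  rw [entOT, ← tsub_le_iff_right]
  refine le_iInf fun ζ => le_iInf fun hζ => ?_
  rw [tsub_le_iff_right]
  have hmul14 : Measurable fun p : EuclideanSpace ℝ (Fin d) × EuclideanSpace ℝ (Fin d) =>
      ENNReal.ofReal (‖p.1‖ ^ 2) := sqnorm_fst_meas
  have key : ENNReal.ofReal (1/4) * ∫⁻ x, ENNReal.ofReal (‖x‖ ^ 2) ∂μ ≤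
      (∫⁻ p, ENNReal.ofReal ((1 / 2 : ℝ) * ‖p.1 - p.2‖ ^ 2) ∂ζ)
        + ENNReal.ofReal (1/2) * ∫⁻ y, ENNReal.ofReal (‖y‖ ^ 2) ∂ν := by
    have hcostm : Measurable fun p : EuclideanSpace ℝ (Fin d) × EuclideanSpace ℝ (Fin d) =>
        ENNReal.ofReal ((1 / 2 : ℝ) * ‖p.1 - p.2‖ ^ 2) :=
      (ENNReal.continuous_ofReal.comp
        (continuous_const.mul (((continuous_fst.sub continuous_snd).norm).pow 2))).measurable
    calc ENNReal.ofReal (1/4) * ∫⁻ x, ENNReal.ofReal (‖x‖ ^ 2) ∂μ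
        = ∫⁻ p : EuclideanSpace ℝ (Fin d) × EuclideanSpace ℝ (Fin d),
            ENNReal.ofReal (1/4) * ENNReal.ofReal (‖p.1‖ ^ 2) ∂ζ := by
          rw [← lintegral_fst_marg hζ.1 sqnorm_meas, lintegral_const_mul _ hmul14]
      _ ≤ ∫⁻ p : EuclideanSpace ℝ (Fin d) × EuclideanSpace ℝ (Fin d),
            (ENNReal.ofReal ((1 / 2 : ℝ) * ‖p.1 - p.2‖ ^ 2)
            + ENNReal.ofReal (1/2) * ENNReal.ofReal (‖p.2‖ ^ 2)) ∂ζ := by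
          refine lintegral_mono fun p => ?_
          rw [← ENNReal.ofReal_mul (by norm_num), ← ENNReal.ofReal_mul (by norm_num),
            ← ENNReal.ofReal_add (by positivity) (by positivity)]
          refine ENNReal.ofReal_le_ofReal ?_
          have h1 : ‖p.1‖ ≤ ‖p.1 - p.2‖ + ‖p.2‖ := by
            have := norm_add_le (p.1 - p.2) p.2
            simpa using this
          nlinarith [norm_nonneg (p.1 - p.2), norm_nonneg p.2, norm_nonneg p.1,
            sq_nonneg (‖p.1 - p.2‖ - ‖p.2‖)]
      _ = (∫⁻ p, ENNReal.ofReal ((1 / 2 : ℝ) * ‖p.1 - p.2‖ ^ 2) ∂ζ)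
            + ENNReal.ofReal (1/2) * ∫⁻ y, ENNReal.ofReal (‖y‖ ^ 2) ∂ν := by
          rw [lintegral_add_left hcostm, lintegral_const_mul _ sqnorm_snd_meas,
            lintegral_snd_marg hζ.2 sqnorm_meas]
  exact key.trans (add_le_add_left (self_le_add_right _ _) _)

lemma entOT_lt_top {d : ℕ} {Ω : Set (EuclideanSpace ℝ (Fin d))} (ε : ℝ)
    {μ ν : Measure (EuclideanSpace ℝ (Fin d))} (hμ : MemP2 μ Ω) (hν : MemP2 ν Ω) :
    entOT ε μ ν < ⊤ := by
  haveI := hμ.1; haveI := hν.1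
  have hmarg : (μ.prod ν).map Prod.fst = μ ∧ (μ.prod ν).map Prod.snd = ν := by
    constructor <;> simp [Measure.map_fst_prod, Measure.map_snd_prod, measure_univ]
  have hKL : KLdiv (μ.prod ν) (μ.prod ν) = 0 := by
    have hae : (fun x => Real.log (((μ.prod ν).rnDeriv (μ.prod ν) x).toReal))
        =ᵐ[μ.prod ν] fun _ => 0 := by
      filter_upwards [Measure.rnDeriv_self (μ.prod ν)] with x hx
      rw [hx]; simp
    rw [KLdiv, if_pos]
    · rw [integral_congr_ae hae]; simp
    · exact ⟨Measure.AbsolutelyContinuous.refl _, (integrable_zero _ _ _).congr hae.symm⟩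
  have hcost : (∫⁻ p, ENNReal.ofReal ((1 / 2 : ℝ) * ‖p.1 - p.2‖ ^ 2) ∂(μ.prod ν)) < ⊤ := by
    calc (∫⁻ p, ENNReal.ofReal ((1 / 2 : ℝ) * ‖p.1 - p.2‖ ^ 2) ∂(μ.prod ν))
        ≤ ∫⁻ p : EuclideanSpace ℝ (Fin d) × EuclideanSpace ℝ (Fin d),
            (ENNReal.ofReal (‖p.1‖ ^ 2) + ENNReal.ofReal (‖p.2‖ ^ 2)) ∂(μ.prod ν) := by
          refine lintegral_mono fun p => ?_
          rw [← ENNReal.ofReal_add (by positivity) (by positivity)]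
          refine ENNReal.ofReal_le_ofReal ?_
          have h2 : ‖p.1 - p.2‖ ^ 2 ≤ (‖p.1‖ + ‖p.2‖) ^ 2 := by
            have h := norm_sub_le p.1 p.2
            have h0 := norm_nonneg (p.1 - p.2)
            nlinarith
          nlinarith [sq_nonneg (‖p.1‖ - ‖p.2‖)]
      _ = (∫⁻ x, ENNReal.ofReal (‖x‖ ^ 2) ∂μ) + ∫⁻ y, ENNReal.ofReal (‖y‖ ^ 2) ∂ν := by
          rw [lintegral_add_left sqnorm_fst_meas,
            lintegral_fst_marg hmarg.1 sqnorm_meas, lintegral_snd_marg hmarg.2 sqnorm_meas]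
      _ < ⊤ := ENNReal.add_lt_top.2 ⟨moment_lt_top hμ.2.2, moment_lt_top hν.2.2⟩
  refine lt_of_le_of_lt (iInf_le_of_le (μ.prod ν) (iInf_le_of_le hmarg le_rfl)) ?_
  rw [hKL, mul_zero, add_zero]
  exact hcost

end Aux

/-- Every infimizing sequence for the entropic barycenter functional `F^ε_{λ,V}`
on `P₂(Ω)` is tight. -/
theorem infimizing_sequence_tight
    {d m : ℕ} (Ω : Set (EuclideanSpace ℝ (Fin d)))
    (hΩne : Ω.Nonempty) (hΩcl : IsClosed Ω)
    (ν : Fin m → Measure (EuclideanSpace ℝ (Fin d))) (hν : ∀ j, MemP2 (ν j) Ω)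
    (lam : Fin m → ℝ) (hlam0 : ∀ j, 0 ≤ lam j) (hlam1 : ∑ j, lam j = 1)
    (ε : ℝ) (hε : 0 < ε)
    (μseq : ℕ → Measure (EuclideanSpace ℝ (Fin d))) (hμseq : ∀ n, MemP2 (μseq n) Ω)
    (hinf : Tendsto (fun n => ∑ j, ENNReal.ofReal (lam j) * entOT ε (μseq n) (ν j))
      atTop
      (𝓝 (⨅ (μ : Measure (EuclideanSpace ℝ (Fin d))) (_ : MemP2 μ Ω),
        ∑ j, ENNReal.ofReal (lam j) * entOT ε μ (ν j)))) :
    ∀ δ : ℝ≥0∞, 0 < δ →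
      ∃ K : Set (EuclideanSpace ℝ (Fin d)), K ⊆ Ω ∧ IsCompact K ∧
        ∀ n, μseq n (Ω \ K) < δ := by
  intro δ hδ
  set M : ℕ → ℝ≥0∞ := fun n => ∫⁻ x, ENNReal.ofReal (‖x‖ ^ 2) ∂(μseq n) with hM
  set F : ℕ → ℝ≥0∞ := fun n => ∑ j, ENNReal.ofReal (lam j) * entOT ε (μseq n) (ν j) with hF
  set C : ℝ≥0∞ :=
    ∑ j, ENNReal.ofReal (lam j) *
      (ENNReal.ofReal (1/2) * ∫⁻ y, ENNReal.ofReal (‖y‖ ^ 2) ∂(ν j)) with hCdef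
  set I : ℝ≥0∞ := ⨅ (μ : Measure (EuclideanSpace ℝ (Fin d))) (_ : MemP2 μ Ω),
    ∑ j, ENNReal.ofReal (lam j) * entOT ε μ (ν j) with hIdef
  have hC : C < ⊤ :=
    ENNReal.sum_lt_top.2 fun j _ => ENNReal.mul_lt_top ENNReal.ofReal_lt_top
      (ENNReal.mul_lt_top ENNReal.ofReal_lt_top (moment_lt_top (hν j).2.2))
  -- key moment bound
  have hkey : ∀ n, ENNReal.ofReal (1/4) * M n ≤ F n + C := by
    intro n
    calc ENNReal.ofReal (1/4) * M n
        = ∑ j, ENNReal.ofReal (lam j) * (ENNReal.ofReal (1/4) * M n) := by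
          rw [← Finset.sum_mul, ← ENNReal.ofReal_sum_of_nonneg fun j _ => hlam0 j, hlam1,
            ENNReal.ofReal_one, one_mul]
      _ ≤ ∑ j, ENNReal.ofReal (lam j) *
            (entOT ε (μseq n) (ν j)
              + ENNReal.ofReal (1/2) * ∫⁻ y, ENNReal.ofReal (‖y‖ ^ 2) ∂(ν j)) :=
          Finset.sum_le_sum fun j _ => mul_le_mul_right (key_ineq ε (μseq n) (ν j)) _
      _ = F n + C := by
          simp only [mul_add, Finset.sum_add_distrib, hF, hCdef]
  have h4 : (4 : ℝ≥0∞) * ENNReal.ofReal (1/4) = 1 := by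
    rw [show (1/4 : ℝ) = (4:ℝ)⁻¹ by norm_num, ENNReal.ofReal_inv_of_pos (by norm_num),
      ENNReal.ofReal_ofNat]
    exact ENNReal.mul_inv_cancel (by norm_num) (by norm_num)
  have hM_le : ∀ n, M n ≤ 4 * (F n + C) := by
    intro n
    calc M n = 4 * (ENNReal.ofReal (1/4) * M n) := by rw [← mul_assoc, h4, one_mul]
      _ ≤ 4 * (F n + C) := mul_le_mul_right (hkey n) 4
  -- the infimum is finite
  have hI : I < ⊤ := by
    refine lt_of_le_of_lt (iInf_le_of_le (μseq 0) (iInf_le_of_le (hμseq 0) le_rfl)) ?_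
    exact ENNReal.sum_lt_top.2 fun j _ =>
      ENNReal.mul_lt_top ENNReal.ofReal_lt_top (entOT_lt_top ε (hμseq 0) (hν j))
  -- eventually F n < I + 1
  have hinf' : Tendsto F atTop (𝓝 I) := hinf
  have hev : ∀ᶠ n in atTop, F n < I + 1 :=
    hinf'.eventually_lt_const (ENNReal.lt_add_right hI.ne one_ne_zero)
  obtain ⟨N, hN⟩ := eventually_atTop.1 hev
  -- uniform moment bound
  set B : ℝ≥0∞ := ((Finset.range (N + 1)).sup M) ⊔ (4 * (I + 1 + C)) with hBdef
  have hB : B < ⊤ := by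
    refine sup_lt_iff.2 ⟨?_, ?_⟩
    · exact (Finset.sup_lt_iff (by simp)).2 fun n _ => moment_lt_top (hμseq n).2.2
    · exact ENNReal.mul_lt_top (by norm_num)
        (ENNReal.add_lt_top.2 ⟨ENNReal.add_lt_top.2 ⟨hI, by norm_num⟩, hC⟩)
  have hMB : ∀ n, M n ≤ B := by
    intro n
    rcases le_or_gt n N with hn | hn
    · exact le_sup_of_le_left (Finset.le_sup (Finset.mem_range.2 (Nat.lt_succ_of_le hn)))
    · refine le_sup_of_le_right ?_
      exact (hM_le n).trans (mul_le_mul_right (add_le_add_left (hN n hn.le).le C) 4)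
  -- choose the radius
  obtain ⟨k, hk⟩ := ENNReal.exists_nat_gt (ENNReal.div_lt_top hB.ne hδ.ne').ne
  set R : ℝ := (k : ℝ) + 1 with hRdef
  have hkR : (0:ℝ) ≤ (k:ℝ) := Nat.cast_nonneg k
  have hR1 : (1 : ℝ) ≤ R := by rw [hRdef]; linarith
  have hR0 : (0 : ℝ) < R := by linarith
  have hRne0 : ENNReal.ofReal (R ^ 2) ≠ 0 := (ENNReal.ofReal_pos.2 (by positivity)).ne'
  have hBlt : B < δ * ENNReal.ofReal (R ^ 2) := by
    have hk' : (k : ℝ≥0∞) ≤ ENNReal.ofReal (R ^ 2) := by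
      rw [← ENNReal.ofReal_natCast k]
      refine ENNReal.ofReal_le_ofReal ?_
      rw [hRdef]; nlinarith
    rcases eq_or_ne δ ⊤ with hδt | hδt
    · rw [hδt, ENNReal.top_mul hRne0]
      exact hB
    · have hlt : B < (k : ℝ≥0∞) * δ := (ENNReal.div_lt_iff (Or.inl hδ.ne') (Or.inl hδt)).1 hk
      calc B < (k : ℝ≥0∞) * δ := hlt
        _ ≤ ENNReal.ofReal (R ^ 2) * δ := mul_le_mul_left hk' δ
        _ = δ * ENNReal.ofReal (R ^ 2) := mul_comm _ _
  refine ⟨Ω ∩ Metric.closedBall 0 R, Set.inter_subset_left,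
    (isCompact_closedBall 0 R).inter_left hΩcl, ?_⟩
  intro n
  have hsub : Ω \ (Ω ∩ Metric.closedBall 0 R) ⊆
      {x : EuclideanSpace ℝ (Fin d) | ENNReal.ofReal (R ^ 2) ≤ ENNReal.ofReal (‖x‖ ^ 2)} := by
    intro x hx
    have hxR : R < ‖x‖ := by
      have hxb : x ∉ Metric.closedBall 0 R := fun hmem => hx.2 ⟨hx.1, hmem⟩
      rw [Metric.mem_closedBall, dist_zero_right, not_le] at hxb
      exact hxb
    exact ENNReal.ofReal_le_ofReal (by nlinarith)
  calc μseq n (Ω \ (Ω ∩ Metric.closedBall 0 R))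
      ≤ μseq n {x : EuclideanSpace ℝ (Fin d) |
          ENNReal.ofReal (R ^ 2) ≤ ENNReal.ofReal (‖x‖ ^ 2)} := measure_mono hsub
    _ ≤ M n / ENNReal.ofReal (R ^ 2) :=
        meas_ge_le_lintegral_div sqnorm_meas.aemeasurable hRne0 ENNReal.ofReal_ne_top
    _ ≤ B / ENNReal.ofReal (R ^ 2) := ENNReal.div_le_div_right (hMB n) _
    _ < δ := ENNReal.div_lt_of_lt_mul hBlt
end
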